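/- Let Σ = {φ_1, …, φ_σ} be a finite FD set and I an instance. If for every i ∈ {1, …, σ} the instance I contains no three tuples that pairwise form φ_i-conflicts, then I can be partitioned into at most 2^σ classes, each of which is consistent with respect to Σ. -/

import Mathlib

/-- A functional dependency `X → Y` is a pair of attribute sets; two tuples form a
`φ`-conflict if they agree on every attribute of `X` but differ on some attribute of `Y`. -/
def IsPhiConflict {α V : Type*} (X Y : Finset α) (s t : α → V) : Prop :=
  (∀ a ∈ X, s a = t a) ∧ (∃ a ∈ Y, s a ≠ t a)

instance {α V : Type*} [DecidableEq V] (X Y : Finset α) (s t : α → V) :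
    Decidable (IsPhiConflict X Y s t) := by
  unfold IsPhiConflict; infer_instance

/-- Two tuples form a conflict w.r.t. a finite FD set if they form a `φ`-conflict
for some FD `φ` of the set. -/
def IsConflict {α V : Type*} (FDs : Finset (Finset α × Finset α)) (s t : α → V) : Prop :=
  ∃ fd ∈ FDs, IsPhiConflict fd.1 fd.2 s t

instance {α V : Type*} [DecidableEq V] (FDs : Finset (Finset α × Finset α)) (s t : α → V) :
    Decidable (IsConflict FDs s t) := by
  unfold IsConflict; infer_instance

/-- A set of tuples is consistent w.r.t. an FD set if no two of its tuples form a conflict. -/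
def Consistent {α V : Type*} (FDs : Finset (Finset α × Finset α)) (J : Finset (α → V)) : Prop :=
  ∀ s ∈ J, ∀ t ∈ J, ¬ IsConflict FDs s t

/-- `opt FDs I` is the minimum of `dist(J,I) = |I| - |J|` over all consistent subsets `J ⊆ I`. -/
noncomputable def opt {α V : Type*} (FDs : Finset (Finset α × Finset α))
    (I : Finset (α → V)) : ℕ :=
  sInf {d : ℕ | ∃ J ⊆ I, Consistent FDs J ∧ d = I.card - J.card}

/-- Let `Σ = {φ_1, …, φ_σ}` be a finite FD set and `I` an instance.  If for every `i`
the instance `I` contains no three tuples pairwise forming `φ_i`-conflicts, then `I` can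
be partitioned into at most `2^σ` classes (the fibers of a coloring `f` with values
`< 2^σ` on `I`), each of which is consistent w.r.t. `Σ`. -/
theorem stmt11 {α V : Type*} (σ : ℕ) (F : Fin σ → Finset α × Finset α)
    (I : Finset (α → V))
    (htriad : ∀ i : Fin σ, ¬ ∃ s ∈ I, ∃ t ∈ I, ∃ u ∈ I,
      IsPhiConflict (F i).1 (F i).2 s t ∧ IsPhiConflict (F i).1 (F i).2 s u ∧
        IsPhiConflict (F i).1 (F i).2 t u) :
    ∃ f : (α → V) → ℕ, (∀ t ∈ I, f t < 2 ^ σ) ∧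
      ∀ s ∈ I, ∀ t ∈ I, f s = f t →
        ¬ ∃ i : Fin σ, IsPhiConflict (F i).1 (F i).2 s t := by
  classical
  -- setoid of agreement on the LHS of FD i
  let r : Fin σ → Setoid (α → V) := fun i =>
    ⟨fun s t => ∀ a ∈ (F i).1, s a = t a,
      ⟨fun _ _ _ => rfl, fun h a ha => (h a ha).symm,
        fun h1 h2 a ha => (h1 a ha).trans (h2 a ha)⟩⟩
  -- representative of each class that has a member in I
  have hrep : ∀ i : Fin σ, ∃ g : Quotient (r i) → (α → V),
      ∀ q, (∃ u ∈ I, Quotient.mk (r i) u = q) → g q ∈ I ∧ Quotient.mk (r i) (g q) = q := by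
    intro i
    have h : ∀ q : Quotient (r i), ∃ s : α → V,
        (∃ u ∈ I, Quotient.mk (r i) u = q) → (s ∈ I ∧ Quotient.mk (r i) s = q) := by
      intro q
      by_cases h : ∃ u ∈ I, Quotient.mk (r i) u = q
      · obtain ⟨u, hu, hq⟩ := h
        exact ⟨u, fun _ => ⟨hu, hq⟩⟩
      · obtain ⟨u, _⟩ := Quotient.exists_rep q
        exact ⟨u, fun h' => absurd h' h⟩
    exact Classical.axiomOfChoice h
  choose g hg using hrep
  -- the bit for FD i
  let b : (α → V) → Fin σ → Fin 2 := fun t i =>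
    if (∀ a ∈ (F i).2, g i (Quotient.mk (r i) t) a = t a) then 0 else 1
  refine ⟨fun t => ((finFunctionFinEquiv (b t)) : ℕ), fun t _ => (finFunctionFinEquiv (b t)).isLt,
    ?_⟩
  rintro s hs t ht hf ⟨i, hX, a, haY, hne⟩
  have hb : b s = b t := finFunctionFinEquiv.injective (Fin.val_injective hf)
  have hq : Quotient.mk (r i) s = Quotient.mk (r i) t := Quotient.sound hX
  set R := g i (Quotient.mk (r i) s) with hR
  obtain ⟨hRI, hRq⟩ := hg i (Quotient.mk (r i) s) ⟨s, hs, rfl⟩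
  have hRs : ∀ a ∈ (F i).1, R a = s a := Quotient.exact hRq
  have hRt : ∀ a ∈ (F i).1, R a = t a := fun a ha => (hRs a ha).trans (hX a ha)
  have hbi : b s i = b t i := congrFun hb i
  by_cases h1 : ∀ a ∈ (F i).2, R a = s a
  · by_cases h2 : ∀ a ∈ (F i).2, g i (Quotient.mk (r i) t) a = t a
    · rw [← hq] at h2
      exact hne (((h1 a haY).symm).trans (h2 a haY))
    · simp only [b, ← hR, if_pos h1, hq, if_neg h2] at hbi
      exact absurd hbi (by rw [← hq]; exact fun h => absurd (h.symm.trans (if_pos h1)) (by decide))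
  · by_cases h2 : ∀ a ∈ (F i).2, g i (Quotient.mk (r i) t) a = t a
    · simp only [b, ← hR, if_neg h1, hq, if_pos h2] at hbi
      exact absurd hbi (by rw [← hq]; exact fun h => absurd (h.symm.trans (if_neg h1)) (by decide))
    · rw [← hq] at h2
      push_neg at h1 h2
      exact htriad i ⟨R, hRI, s, hs, t, ht, ⟨hRs, h1⟩, ⟨hRt, h2⟩, ⟨hX, a, haY, hne⟩⟩
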